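/- Let A be a finite nonempty index set, θ : A → [0,1], and Γ ≥ 0 with ⌊Γ⌋ + 1 ≤ |A|. Then B(Γ, θ) equals the optimal value of the linear program: maximize Σ_{a∈A} p̂_a·z_a over all z : A → [0,1] satisfying Σ_{a∈A} z_a ≤ Γ. -/
import Mathlib


open Finset

/-- For `θ : A → [0,1]`, `p̂_a = max{θ_a, 1 − θ_a}`. -/
noncomputable def phat {ι : Type*} (θ : ι → ℝ) (a : ι) : ℝ :=
  max (θ a) (1 - θ a)

/-- Protection term `B(Γ, θ)`: the maximum over pairs `(S₀, a₀)` with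
`S₀ ⊆ A`, `|S₀| = ⌊Γ⌋`, `a₀ ∈ A \ S₀`, of
`Σ_{a∈S₀} p̂_a + (Γ − ⌊Γ⌋)·p̂_{a₀}`. -/
noncomputable def protB {ι : Type*} [Fintype ι] (Γ : ℝ) (θ : ι → ℝ) : ℝ :=
  sSup {x : ℝ | ∃ (S : Finset ι) (a₀ : ι), S.card = Nat.floor Γ ∧ a₀ ∉ S ∧
    x = (∑ a ∈ S, phat θ a) + (Γ - (Nat.floor Γ : ℝ)) * phat θ a₀}

lemma phat_nonneg' {ι : Type*} (θ : ι → ℝ) (hθ : ∀ a, θ a ∈ Set.Icc (0 : ℝ) 1) (a : ι) :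
    0 ≤ phat θ a := le_trans (hθ a).1 (le_max_left _ _)

lemma phat_le_one' {ι : Type*} (θ : ι → ℝ) (hθ : ∀ a, θ a ∈ Set.Icc (0 : ℝ) 1) (a : ι) :
    phat θ a ≤ 1 := max_le (hθ a).2 (by linarith [(hθ a).1])

/-- **LP characterization of the protection term** (Lemma in Appendix B): `B(Γ, θ)`
equals the optimal value of the linear program
`max Σ_a p̂_a·z_a` subject to `z : A → [0,1]` and `Σ_a z_a ≤ Γ`. -/
theorem stmt2 {ι : Type*} [Fintype ι] [Nonempty ι] (θ : ι → ℝ)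
    (hθ : ∀ a, θ a ∈ Set.Icc (0 : ℝ) 1) (Γ : ℝ) (hΓ : 0 ≤ Γ)
    (hfloor : Nat.floor Γ + 1 ≤ Fintype.card ι) :
    protB Γ θ = sSup {x : ℝ | ∃ z : ι → ℝ,
      (∀ a, z a ∈ Set.Icc (0 : ℝ) 1) ∧ (∑ a, z a) ≤ Γ ∧
      x = ∑ a, phat θ a * z a} := by
  classical
  set k := Nat.floor Γ with hk
  have hfrac0 : (0 : ℝ) ≤ Γ - k := by
    have := Nat.floor_le hΓ; linarith
  have hfrac1 : Γ - k ≤ 1 := by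
    have := Nat.lt_floor_add_one Γ
    have : Γ < (k : ℝ) + 1 := by exact_mod_cast this
    linarith
  set Lset := {x : ℝ | ∃ z : ι → ℝ,
      (∀ a, z a ∈ Set.Icc (0 : ℝ) 1) ∧ (∑ a, z a) ≤ Γ ∧
      x = ∑ a, phat θ a * z a} with hLset
  have hp0 := phat_nonneg' θ hθ
  have hp1 := phat_le_one' θ hθ
  -- every B-element is an L-element
  have hBL : ∀ x ∈ {x : ℝ | ∃ (S : Finset ι) (a₀ : ι), S.card = k ∧ a₀ ∉ S ∧
      x = (∑ a ∈ S, phat θ a) + (Γ - (k : ℝ)) * phat θ a₀}, x ∈ Lset := by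
    rintro x ⟨S, a₀, hScard, ha₀, rfl⟩
    refine ⟨fun a => (if a ∈ S then (1:ℝ) else 0) + (if a = a₀ then Γ - k else 0), ?_, ?_, ?_⟩
    · intro a
      rcases eq_or_ne a a₀ with rfl | hne
      · simp [ha₀, Set.mem_Icc, hfrac0, hfrac1]
      · by_cases h1 : a ∈ S <;> simp [h1, hne, Set.mem_Icc]
    · rw [Finset.sum_add_distrib, Finset.sum_ite_eq' Finset.univ a₀ (fun _ => Γ - (k:ℝ))]
      simp only [Finset.sum_boole, Finset.mem_univ, if_true]
      have h1 : (Finset.univ.filter (· ∈ S)).card = k := by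
        rw [Finset.filter_mem_eq_inter, Finset.univ_inter, hScard]
      rw [h1]
      linarith
    · have : ∀ a, phat θ a * ((if a ∈ S then (1:ℝ) else 0) + (if a = a₀ then Γ - k else 0))
          = (if a ∈ S then phat θ a else 0) + (if a = a₀ then phat θ a * (Γ - k) else 0) := by
        intro a
        by_cases h1 : a ∈ S <;> by_cases h2 : a = a₀ <;> simp [h1, h2, ha₀]
      simp only [this]
      rw [Finset.sum_add_distrib, Finset.sum_ite_eq' Finset.univ a₀
        (fun a => phat θ a * (Γ - (k:ℝ))), Finset.sum_ite_mem, Finset.univ_inter]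
      simp [mul_comm]
  -- choose maximizing S and a₀
  obtain ⟨T, -, hTcard⟩ := Finset.exists_subset_card_eq
    (s := (Finset.univ : Finset ι)) (n := k) (by simpa using le_trans (Nat.le_succ k) hfloor)
  have hPne : (Finset.univ.powersetCard k : Finset (Finset ι)).Nonempty :=
    ⟨T, by simp [Finset.mem_powersetCard, hTcard]⟩
  obtain ⟨S, hSmem, hSmax⟩ := Finset.exists_max_image _ (fun S => ∑ a ∈ S, phat θ a) hPne
  have hScard : S.card = k := (Finset.mem_powersetCard.1 hSmem).2
  have hcomp : (Finset.univ \ S).Nonempty := by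
    rw [← Finset.card_pos, Finset.card_sdiff_of_subset (Finset.subset_univ S)]
    simp only [Finset.card_univ, hScard]
    omega
  obtain ⟨a₀, ha₀mem, ha₀max⟩ := Finset.exists_max_image _ (phat θ) hcomp
  have ha₀ : a₀ ∉ S := (Finset.mem_sdiff.1 ha₀mem).2
  -- key: p̂ a₀ ≤ p̂ a for a ∈ S
  have hkey : ∀ a ∈ S, phat θ a₀ ≤ phat θ a := by
    intro a haS
    have hne : a₀ ≠ a := fun h => ha₀ (h ▸ haS)
    have hmem : insert a₀ (S.erase a) ∈ Finset.univ.powersetCard k := by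
      rw [Finset.mem_powersetCard]
      refine ⟨Finset.subset_univ _, ?_⟩
      rw [Finset.card_insert_of_notMem (fun h => ha₀ (Finset.erase_subset _ _ h)),
        Finset.card_erase_of_mem haS, hScard]
      have : 1 ≤ k := by rw [← hScard]; exact Finset.card_pos.2 ⟨a, haS⟩
      omega
    have := hSmax _ hmem
    rw [Finset.sum_insert (fun h => ha₀ (Finset.erase_subset _ _ h))] at this
    have herase : ∑ b ∈ S.erase a, phat θ b + phat θ a = ∑ b ∈ S, phat θ b :=
      Finset.sum_erase_add _ _ haS
    linarith
  -- every L-element is ≤ the B-element given by (S, a₀)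
  have hLB : ∀ x ∈ Lset,
      x ≤ (∑ a ∈ S, phat θ a) + (Γ - (k : ℝ)) * phat θ a₀ := by
    rintro x ⟨z, hz, hsum, rfl⟩
    set c := phat θ a₀ with hc
    have step1 : ∑ a ∈ Finset.univ \ S, phat θ a * z a ≤ c * ∑ a ∈ Finset.univ \ S, z a := by
      rw [Finset.mul_sum]
      refine Finset.sum_le_sum fun a ha => ?_
      exact mul_le_mul_of_nonneg_right (ha₀max a ha) (hz a).1
    have step2 : ∑ a ∈ S, phat θ a * z a ≤ (∑ a ∈ S, (phat θ a - c)) + c * ∑ a ∈ S, z a := by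
      rw [Finset.mul_sum, ← Finset.sum_add_distrib]
      refine Finset.sum_le_sum fun a ha => ?_
      have h1 := hkey a ha
      have h2 := (hz a).1
      have h3 := (hz a).2
      nlinarith
    have hsplit : ∑ a, phat θ a * z a
        = ∑ a ∈ S, phat θ a * z a + ∑ a ∈ Finset.univ \ S, phat θ a * z a := by
      rw [← Finset.sum_sdiff (Finset.subset_univ S)]; ring
    have hzsplit : ∑ a ∈ S, z a + ∑ a ∈ Finset.univ \ S, z a = ∑ a, z a := by
      rw [← Finset.sum_sdiff (Finset.subset_univ S) (f := z)]; ring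
    have hsub : ∑ a ∈ S, (phat θ a - c) = (∑ a ∈ S, phat θ a) - k * c := by
      rw [Finset.sum_sub_distrib, Finset.sum_const, hScard, nsmul_eq_mul]
    have hc0 : 0 ≤ c := hp0 a₀
    have hzΓ : c * (∑ a ∈ S, z a + ∑ a ∈ Finset.univ \ S, z a) ≤ c * Γ := by
      rw [hzsplit]; exact mul_le_mul_of_nonneg_left hsum hc0
    calc ∑ a, phat θ a * z a
        = ∑ a ∈ S, phat θ a * z a + ∑ a ∈ Finset.univ \ S, phat θ a * z a := hsplit
      _ ≤ (∑ a ∈ S, (phat θ a - c)) + c * ∑ a ∈ S, z a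
            + c * ∑ a ∈ Finset.univ \ S, z a := by linarith
      _ = (∑ a ∈ S, (phat θ a - c)) + c * (∑ a ∈ S, z a + ∑ a ∈ Finset.univ \ S, z a) := by ring
      _ ≤ (∑ a ∈ S, (phat θ a - c)) + c * Γ := by linarith
      _ = (∑ a ∈ S, phat θ a) + (Γ - (k : ℝ)) * c := by rw [hsub]; ring
  -- bounds
  have hBelem : (∑ a ∈ S, phat θ a) + (Γ - (k : ℝ)) * phat θ a₀ ∈
      {x : ℝ | ∃ (S : Finset ι) (a₀ : ι), S.card = k ∧ a₀ ∉ S ∧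
        x = (∑ a ∈ S, phat θ a) + (Γ - (k : ℝ)) * phat θ a₀} := ⟨S, a₀, hScard, ha₀, rfl⟩
  have hLbdd : BddAbove Lset :=
    ⟨(∑ a ∈ S, phat θ a) + (Γ - (k : ℝ)) * phat θ a₀, fun x hx => hLB x hx⟩
  have hBbdd : BddAbove {x : ℝ | ∃ (S : Finset ι) (a₀ : ι), S.card = k ∧ a₀ ∉ S ∧
      x = (∑ a ∈ S, phat θ a) + (Γ - (k : ℝ)) * phat θ a₀} :=
    ⟨(∑ a ∈ S, phat θ a) + (Γ - (k : ℝ)) * phat θ a₀,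
      fun x hx => hLB x (hBL x hx)⟩
  have hLne : Lset.Nonempty := ⟨_, hBL _ hBelem⟩
  unfold protB
  rw [← hk]
  apply le_antisymm
  · exact csSup_le ⟨_, hBelem⟩ fun x hx => le_csSup hLbdd (hBL x hx)
  · exact csSup_le hLne fun x hx => le_trans (hLB x hx) (le_csSup hBbdd hBelem)
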